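/- Let p ≥ 3 be prime and a ∈ ℚ_p with |a|_p > 1. Suppose there is no c ∈ ℚ_p with c² = -a. Then for every x ∈ ℚ_p \ {0}, the iterates of φ(x) = a·x + 1/x satisfy |φⁿ(x)|_p → ∞ as n → ∞. -/

import Mathlib

open Filter

lemma sq_near_one (p : ℕ) [Fact p.Prime] (hp : 3 ≤ p) (u : ℚ_[p]) (hu : ‖u - 1‖ < 1) :
    ∃ c : ℚ_[p], c ^ 2 = u := by
  have hnorm : ‖u‖ ≤ 1 := by
    have h := Padic.nonarchimedean (u - 1) 1
    simpa using h.trans (max_le hu.le (by norm_num))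
  set U : ℤ_[p] := ⟨u, hnorm⟩ with hU
  set F : Polynomial ℤ_[p] := Polynomial.X ^ 2 - Polynomial.C U with hF
  have hderiv : F.derivative = Polynomial.C 2 * Polynomial.X := by
    simp [hF, Polynomial.derivative_pow]
  have heval1 : F.eval 1 = 1 - U := by simp [hF]
  have hdeval : F.derivative.eval 1 = 2 := by simp [hderiv]
  have h2 : ‖(2 : ℤ_[p])‖ = 1 := by
    rcases lt_or_eq_of_le (PadicInt.norm_le_one (p := p) 2) with h | h
    · exfalso
      have h' : ‖((2 : ℤ) : ℤ_[p])‖ < 1 := by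
        have : ((2 : ℤ) : ℤ_[p]) = (2 : ℤ_[p]) := by push_cast; ring
        rw [this]; exact h
      have := (PadicInt.norm_int_lt_one_iff_dvd (p := p) 2).mp h'
      have hple : (p : ℤ) ≤ 2 := Int.le_of_dvd (by norm_num) this
      omega
    · exact h
  have hlt : ‖F.eval 1‖ < ‖F.derivative.eval 1‖ ^ 2 := by
    rw [heval1, hdeval, h2, one_pow]
    have : ((1 - U : ℤ_[p]) : ℚ_[p]) = 1 - u := rfl
    rw [PadicInt.norm_def, this, norm_sub_rev]
    exact hu
  obtain ⟨z, hz, -⟩ := hensels_lemma hlt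
  refine ⟨(z : ℚ_[p]), ?_⟩
  have : z ^ 2 = U := by
    have := hz
    simp [hF, sub_eq_zero] at this
    exact this
  calc (z : ℚ_[p]) ^ 2 = ((z ^ 2 : ℤ_[p]) : ℚ_[p]) := by push_cast; ring
    _ = u := by rw [this]

theorem stmt3 (p : ℕ) [Fact p.Prime] (hp : 3 ≤ p) (a : ℚ_[p]) (ha : 1 < ‖a‖)
    (hsq : ¬ ∃ c : ℚ_[p], c ^ 2 = -a)
    (x : ℚ_[p]) (hx : x ≠ 0) :
    Filter.Tendsto (fun n : ℕ => ‖(fun z : ℚ_[p] => a * z + 1 / z)^[n] x‖)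
      Filter.atTop Filter.atTop := by
  set φ : ℚ_[p] → ℚ_[p] := fun z => a * z + 1 / z with hφ
  have ha0 : a ≠ 0 := by
    intro h; rw [h] at ha; norm_num at ha
  -- key norm lower bound
  have hone : ∀ y : ℚ_[p], 1 ≤ ‖a * y ^ 2 + 1‖ := by
    intro y
    rcases lt_trichotomy ‖a * y ^ 2‖ 1 with h | h | h
    · have hne : ‖a * y ^ 2‖ ≠ ‖(1 : ℚ_[p])‖ := by rw [norm_one]; exact h.ne
      rw [Padic.add_eq_max_of_ne hne]; simp
    · by_contra hc
      push_neg at hc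
      have hy : y ≠ 0 := by
        intro h0; rw [h0] at h; simp at h
      have hu : ‖(-(a * y ^ 2)) - 1‖ < 1 := by
        rw [show (-(a * y ^ 2)) - 1 = -(a * y ^ 2 + 1) by ring, norm_neg]
        exact hc
      obtain ⟨c, hc2⟩ := sq_near_one p hp _ hu
      refine hsq ⟨c / y, ?_⟩
      rw [div_pow, hc2]
      field_simp
    · have hne : ‖a * y ^ 2‖ ≠ ‖(1 : ℚ_[p])‖ := by rw [norm_one]; exact h.ne'
      rw [Padic.add_eq_max_of_ne hne]
      simp only [norm_one]
      exact le_max_right _ _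
  have hrw : ∀ y : ℚ_[p], y ≠ 0 → φ y = (a * y ^ 2 + 1) / y := by
    intro y hy; rw [hφ]; field_simp
  have hlow : ∀ y : ℚ_[p], y ≠ 0 → 1 / ‖y‖ ≤ ‖φ y‖ := by
    intro y hy
    rw [hrw y hy, norm_div]
    have hy0 : (0 : ℝ) < ‖y‖ := norm_pos_iff.mpr hy
    gcongr
    exact hone y
  have hstep : ∀ y : ℚ_[p], 1 ≤ ‖y‖ → ‖φ y‖ = ‖a‖ * ‖y‖ := by
    intro y hy
    have hy0 : y ≠ 0 := by
      intro h0; rw [h0] at hy; simp at hy; linarith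
    have hyp : (0 : ℝ) < ‖y‖ := norm_pos_iff.mpr hy0
    have h1 : ‖1 / y‖ ≤ 1 := by
      rw [norm_div, norm_one]
      exact (div_le_one hyp).mpr hy
    have hay : 1 < ‖a * y‖ := by
      rw [norm_mul]
      nlinarith
    have hne : ‖1 / y‖ ≠ ‖a * y‖ := by linarith [lt_of_le_of_lt h1 hay]
    have : ‖φ y‖ = max ‖a * y‖ ‖1 / y‖ := by
      rw [hφ]
      exact Padic.add_eq_max_of_ne (fun h => hne h.symm)
    rw [this, max_eq_left (le_trans h1 hay.le), norm_mul]
  have hy1 : 1 ≤ ‖φ x‖ := by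
    rcases le_or_gt 1 ‖x‖ with h | h
    · rw [hstep x h]
      nlinarith
    · have hxp : (0 : ℝ) < ‖x‖ := norm_pos_iff.mpr hx
      have : 1 ≤ 1 / ‖x‖ := (one_le_div hxp).mpr h.le
      linarith [hlow x hx]
  have hiter : ∀ n : ℕ, ‖φ^[n] (φ x)‖ = ‖a‖ ^ n * ‖φ x‖ := by
    intro n
    induction n with
    | zero => simp
    | succ n ih =>
      have hge : 1 ≤ ‖φ^[n] (φ x)‖ := by
        rw [ih]
        have : (1:ℝ) ≤ ‖a‖ ^ n := one_le_pow₀ ha.le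
        nlinarith
      rw [Function.iterate_succ_apply', hstep _ hge, ih, pow_succ]
      ring
  have hmain : Filter.Tendsto (fun n : ℕ => ‖a‖ ^ n * ‖φ x‖) Filter.atTop Filter.atTop :=
    (tendsto_pow_atTop_atTop_of_one_lt ha).atTop_mul_const (lt_of_lt_of_le zero_lt_one hy1)
  have heq : (fun n : ℕ => ‖φ^[n + 1] x‖) = fun n : ℕ => ‖a‖ ^ n * ‖φ x‖ := by
    funext n
    rw [Function.iterate_succ_apply, hiter]
  rw [← Filter.tendsto_add_atTop_iff_nat 1]
  exact heq ▸ hmain
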